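/- Let H₁, H₂ be Hilbert spaces with unit vectors Ω₁ ∈ H₁, Ω₂ ∈ H₂, and let P₂ be the orthogonal projection onto ℂΩ₂ in H₂. Define Φ(Z) = ⟨Ω₁⊗Ω₂, Z(Ω₁⊗Ω₂)⟩ for bounded operators Z on H₁⊗H₂, and embeddings J₁(X) = X ⊗ P₂, J₂(Y) = 1 ⊗ Y. Then for all bounded operators X₁, X₂ on H₁ and Y on H₂: J₁(X₁) J₂(Y) J₁(X₂) = Φ(J₂(Y)) · J₁(X₁) J₁(X₂). -/

import Mathlib

open scoped InnerProductSpace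

/-- In the monotone product of two quantum probability spaces, realized on the tensor
product Hilbert space `H = H₁ ⊗ H₂` with embeddings `J₁ X = X ⊗ P₂` and `J₂ Y = 1 ⊗ Y`,
one has `J₁(X₁) J₂(Y) J₁(X₂) = Φ(J₂(Y)) • J₁(X₁) J₁(X₂)`. -/
theorem monotone_product_middle_reduction
    {H₁ H₂ H : Type*}
    [NormedAddCommGroup H₁] [InnerProductSpace ℂ H₁] [CompleteSpace H₁]
    [NormedAddCommGroup H₂] [InnerProductSpace ℂ H₂] [CompleteSpace H₂]
    [NormedAddCommGroup H] [InnerProductSpace ℂ H] [CompleteSpace H]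
    (Ω₁ : H₁) (hΩ₁ : ‖Ω₁‖ = 1) (Ω₂ : H₂) (hΩ₂ : ‖Ω₂‖ = 1)
    (Ω : H) (hΩ : ‖Ω‖ = 1)
    -- `tens A B` represents the tensor product operator `A ⊗ B` on `H = H₁ ⊗ H₂`
    (tens : (H₁ →L[ℂ] H₁) →ₗ[ℂ] (H₂ →L[ℂ] H₂) →ₗ[ℂ] (H →L[ℂ] H))
    (htensOne : tens 1 1 = 1)
    (htensMul : ∀ (A C : H₁ →L[ℂ] H₁) (B D : H₂ →L[ℂ] H₂),
      tens A B * tens C D = tens (A * C) (B * D))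
    (htensState : ∀ (A : H₁ →L[ℂ] H₁) (B : H₂ →L[ℂ] H₂),
      ⟪Ω, (tens A B) Ω⟫_ℂ = ⟪Ω₁, A Ω₁⟫_ℂ * ⟪Ω₂, B Ω₂⟫_ℂ)
    -- `P₂` is the orthogonal projection onto `ℂ Ω₂`
    (P₂ : H₂ →L[ℂ] H₂) (hP₂ : ∀ y : H₂, P₂ y = ⟪Ω₂, y⟫_ℂ • Ω₂)
    (X₁ X₂ : H₁ →L[ℂ] H₁) (Y : H₂ →L[ℂ] H₂) :
    tens X₁ P₂ * tens 1 Y * tens X₂ P₂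
      = ⟪Ω, (tens 1 Y) Ω⟫_ℂ • (tens X₁ P₂ * tens X₂ P₂) := by
  have hn2 : ⟪Ω₂, Ω₂⟫_ℂ = 1 := by
    rw [inner_self_eq_norm_sq_to_K, hΩ₂]; norm_num
  have hn1 : ⟪Ω₁, Ω₁⟫_ℂ = 1 := by
    rw [inner_self_eq_norm_sq_to_K, hΩ₁]; norm_num
  have hPYP : P₂ * Y * P₂ = ⟪Ω₂, Y Ω₂⟫_ℂ • P₂ := by
    ext y
    simp only [ContinuousLinearMap.mul_apply, hP₂, map_smul,
      ContinuousLinearMap.smul_apply, inner_smul_right]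
    rw [smul_comm]
  have hPP : P₂ * P₂ = P₂ := by
    ext y
    simp only [ContinuousLinearMap.mul_apply, hP₂, map_smul, inner_smul_right, hn2]
    simp
  have hstate : ⟪Ω, (tens 1 Y) Ω⟫_ℂ = ⟪Ω₂, Y Ω₂⟫_ℂ := by
    rw [htensState]
    simp [hn1, hΩ₁, ContinuousLinearMap.one_apply]
  rw [htensMul, htensMul, hstate, hPYP, map_smul, htensMul, hPP, mul_one]
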